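/- For every m ≥ 1, every m×m real matrix A, and every integer r with 1 ≤ r ≤ m, one has trace(A · χ_{A,r−1}(A)) = r · ε_r(A). -/

import Mathlib

open Polynomial Matrix

/-- Over `ℂ`, the trace of `A ^ k` is the sum of the `k`-th powers of the roots of the
characteristic polynomial of `A`. -/
private lemma tracePowAux : ∀ (n : ℕ) (ι : Type) (_ : Fintype ι) (_ : DecidableEq ι),
    Fintype.card ι = n → ∀ (A : Matrix ι ι ℂ) (k : ℕ),
    (A ^ k).trace = ((A.charpoly.roots).map (· ^ k)).sum := by
  intro n
  induction n with
  | zero =>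
    intro ι _ _ hcard A k
    haveI : IsEmpty ι := Fintype.card_eq_zero_iff.mp hcard
    have h1 : A.charpoly = 1 := by
      rw [Matrix.charpoly, Matrix.det_isEmpty]
    simp [h1, Matrix.trace]
  | succ n IH =>
    intro ι _ _ hcard A k
    haveI : Nonempty ι := Fintype.card_pos_iff.mp (by omega)
    set V := ι → ℂ with hV
    let b0 : Module.Basis ι ℂ V := Pi.basisFun ℂ ι
    let f : Module.End ℂ V := Matrix.toLin b0 b0 A
    have hfA : LinearMap.toMatrix b0 b0 f = A := LinearMap.toMatrix_toLin b0 b0 A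
    obtain ⟨μ, hμ⟩ := Module.End.exists_eigenvalue f
    obtain ⟨v, hv⟩ := hμ.exists_hasEigenvector
    have hvne : v ≠ 0 := hv.right
    have hli := (linearIndepOn_singleton_iff (R := ℂ) (v := id)).mpr hvne
    haveI := FiniteDimensional.fintypeBasisIndex (Module.Basis.extend hli)
    have hcardt : Fintype.card (hli.extend (Set.subset_univ _)) = n + 1 := by
      rw [← Module.finrank_eq_card_basis (Module.Basis.extend hli),
        Module.finrank_fintype_fun_eq_card, hcard]
    let vpt : hli.extend (Set.subset_univ _) :=
      ⟨v, hli.subset_extend _ (Set.mem_singleton v)⟩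
    let e1 := Fintype.equivFinOfCardEq hcardt
    let e : hli.extend (Set.subset_univ _) ≃ Fin (n + 1) :=
      e1.trans (Equiv.swap (e1 vpt) 0)
    let b := (Module.Basis.extend hli).reindex e
    have hb0 : b 0 = v := by
      have he : e.symm 0 = vpt := by
        rw [Equiv.symm_apply_eq]
        simp [e, Equiv.swap_apply_left]
      rw [Module.Basis.reindex_apply, he]
      exact Module.Basis.extend_apply_self hli vpt
    set B := LinearMap.toMatrix b b f with hB
    have hcolB : ∀ i, B i 0 = if i = 0 then μ else 0 := by
      intro i
      rw [hB, LinearMap.toMatrix_apply, hb0, hv.apply_eq_smul, ← hb0, _root_.map_smul,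
        Module.Basis.repr_self]
      simp [Finsupp.single_apply, eq_comm]
    -- block decomposition
    let e2 : Fin 1 ⊕ Fin n ≃ Fin (n + 1) :=
      finSumFinEquiv.trans (finCongr (by omega))
    have he2l : ∀ i : Fin 1, e2 (Sum.inl i) = 0 := by
      intro i
      apply Fin.ext
      simp [e2, Fin.ext_iff]
    have he2r : ∀ j : Fin n, e2 (Sum.inr j) = j.succ := by
      intro j
      apply Fin.ext
      simp [e2]
    let Xb : Matrix (Fin 1) (Fin 1) ℂ := Matrix.of fun _ _ => μ
    let Y : Matrix (Fin 1) (Fin n) ℂ := Matrix.of fun _ j => B 0 j.succ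
    let D : Matrix (Fin n) (Fin n) ℂ := B.submatrix Fin.succ Fin.succ
    have hC : B.submatrix e2 e2 = fromBlocks Xb Y 0 D := by
      ext i j
      cases i with
      | inl i =>
        cases j with
        | inl j => simp [Matrix.submatrix_apply, he2l, fromBlocks, Xb, hcolB]
        | inr j => simp [Matrix.submatrix_apply, he2l, he2r, fromBlocks, Y]
      | inr i =>
        cases j with
        | inl j =>
          simp [Matrix.submatrix_apply, he2l, he2r, fromBlocks, hcolB,
            Fin.succ_ne_zero]
        | inr j => simp [Matrix.submatrix_apply, he2r, fromBlocks, D]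
    -- charpoly facts
    have hchB : B.charpoly = A.charpoly := by
      rw [hB, LinearMap.charpoly_toMatrix f b, ← hfA, LinearMap.charpoly_toMatrix f b0]
    have hchC : (fromBlocks Xb Y 0 D).charpoly = B.charpoly := by
      rw [← hC]
      have : B.submatrix e2 e2 = (reindex e2.symm e2.symm) B := by
        simp [Matrix.reindex_apply]
      rw [this, Matrix.charpoly_reindex]
    have hchX : Xb.charpoly = Polynomial.X - Polynomial.C μ := by
      rw [Matrix.charpoly, Matrix.det_fin_one, charmatrix_apply_eq]
      rfl
    have hchblocks : A.charpoly = (Polynomial.X - Polynomial.C μ) * D.charpoly := by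
      rw [← hchB, ← hchC, Matrix.charpoly_fromBlocks_zero₂₁, hchX]
    have hroots : A.charpoly.roots = μ ::ₘ D.charpoly.roots := by
      have hne : ((Polynomial.X - Polynomial.C μ) * D.charpoly) ≠ 0 := by
        rw [← hchblocks]; exact A.charpoly_monic.ne_zero
      rw [hchblocks, Polynomial.roots_mul hne, Polynomial.roots_X_sub_C,
        Multiset.singleton_add]
    -- traces
    have htrA : (A ^ k).trace = (B ^ k).trace := by
      have h1 : A ^ k = LinearMap.toMatrix b0 b0 (f ^ k) := by
        rw [← hfA, LinearMap.toMatrix_pow]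
      have h2 : B ^ k = LinearMap.toMatrix b b (f ^ k) := by
        rw [hB, LinearMap.toMatrix_pow]
      rw [h1, h2, ← LinearMap.trace_eq_matrix_trace ℂ b0,
        ← LinearMap.trace_eq_matrix_trace ℂ b]
    have htrB : (B ^ k).trace = ((fromBlocks Xb Y 0 D) ^ k).trace := by
      have h3 : (fromBlocks Xb Y 0 D) ^ k = (B ^ k).submatrix e2 e2 := by
        rw [← hC]
        have h4 : ∀ M : Matrix (Fin (n+1)) (Fin (n+1)) ℂ,
            M.submatrix e2 e2 = (reindexAlgEquiv ℂ ℂ e2.symm) M := by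
          intro M; simp [Matrix.reindexAlgEquiv_apply, Matrix.reindex_apply]
        rw [h4, h4, map_pow]
      have hts : ∀ M : Matrix (Fin (n + 1)) (Fin (n + 1)) ℂ,
          (M.submatrix e2 e2).trace = M.trace := by
        intro M
        rw [Matrix.trace, Matrix.trace, ← Equiv.sum_comp e2 (fun i => M.diag i)]
        rfl
      rw [h3, hts]
    -- powers of block triangular
    have hpow : ∀ l : ℕ, ∃ Y' : Matrix (Fin 1) (Fin n) ℂ,
        (fromBlocks Xb Y 0 D) ^ l = fromBlocks (Xb ^ l) Y' 0 (D ^ l) := by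
      intro l
      induction l with
      | zero => exact ⟨0, by simp [Matrix.fromBlocks_one]⟩
      | succ l ih =>
        obtain ⟨Y', hY'⟩ := ih
        refine ⟨Xb ^ l * Y + Y' * D, ?_⟩
        rw [pow_succ, hY', Matrix.fromBlocks_multiply]
        simp [pow_succ]
    obtain ⟨Y', hY'⟩ := hpow k
    have htrblocks : ((fromBlocks Xb Y 0 D) ^ k).trace = μ ^ k + (D ^ k).trace := by
      rw [hY']
      have h5 : (fromBlocks (Xb ^ k) Y' 0 (D ^ k)).trace = (Xb ^ k).trace + (D ^ k).trace := by
        rw [Matrix.trace, Matrix.trace, Matrix.trace, Fintype.sum_sum_type]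
        rfl
      rw [h5]
      have hXsm : Xb = μ • (1 : Matrix (Fin 1) (Fin 1) ℂ) := by
        ext i j
        fin_cases i; fin_cases j
        simp [Xb]
      have : (Xb ^ k).trace = μ ^ k := by
        rw [hXsm, _root_.smul_pow, one_pow, Matrix.trace_smul, Matrix.trace_one]
        simp
      rw [this]
    -- induction hypothesis
    have hD := IH (Fin n) inferInstance inferInstance (by simp) D k
    rw [htrA, htrB, htrblocks, hD, hroots]
    simp


/-- The `r`-th elementary invariant of an `m × m` real matrix `A`:
`ε_r(A) = (−1)^r · (coefficient of X^(m−r) in det(X·I − A))`. -/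
noncomputable def elemInv (m : ℕ) (A : Matrix (Fin m) (Fin m) ℝ) (r : ℕ) : ℝ :=
  (-1 : ℝ) ^ r * (Matrix.charpoly A).coeff (m - r)

/-- The `r`-th Newton polynomial of `A`, `χ_{A,r}(X) = Σ_{k=0}^{r} (−1)^k ε_{r−k}(A) X^k`,
evaluated at the matrix `B`. -/
noncomputable def newtonEval (m : ℕ) (A B : Matrix (Fin m) (Fin m) ℝ) (r : ℕ) :
    Matrix (Fin m) (Fin m) ℝ :=
  ∑ k ∈ Finset.range (r + 1), ((-1 : ℝ) ^ k * elemInv m A (r - k)) • B ^ k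

/-- `trace(A · χ_{A,r−1}(A)) = r · ε_r(A)` (the Newton–Girard identity). -/
theorem trace_mul_newtonEval (m : ℕ) (hm : 1 ≤ m) (A : Matrix (Fin m) (Fin m) ℝ)
    (r : ℕ) (hr1 : 1 ≤ r) (hrm : r ≤ m) :
    Matrix.trace (A * newtonEval m A A (r - 1)) = (r : ℝ) * elemInv m A r := by
  classical
  set φ : ℝ →+* ℂ := Complex.ofRealHom with hφ
  set Ac : Matrix (Fin m) (Fin m) ℂ := A.map φ with hAc
  set s : Multiset ℂ := Ac.charpoly.roots with hs
  have hs_card : Multiset.card s = m := by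
    rw [hs, splits_iff_card_roots.mp (IsAlgClosed.splits Ac.charpoly),
      Matrix.charpoly_natDegree_eq_dim, Fintype.card_fin]
  have hprod : Ac.charpoly = (s.map fun a => Polynomial.X - Polynomial.C a).prod :=
    (prod_multiset_X_sub_C_of_monic_of_roots_card_eq Ac.charpoly_monic
      (splits_iff_card_roots.mp (IsAlgClosed.splits Ac.charpoly))).symm
  -- elementary invariants as esymm of roots
  have hE : ∀ j : ℕ, j ≤ m → (φ (elemInv m A j) : ℂ) = s.esymm j := by
    intro j hj
    rw [elemInv, _root_.map_mul, _root_.map_pow, _root_.map_neg, _root_.map_one]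
    have hc : φ ((Matrix.charpoly A).coeff (m - j)) = Ac.charpoly.coeff (m - j) := by
      rw [hAc, Matrix.charpoly_map, Polynomial.coeff_map]
    rw [hc, hprod, Multiset.prod_X_sub_C_coeff s (by omega : m - j ≤ Multiset.card s)]
    rw [hs_card]
    have h1 : m - (m - j) = j := by omega
    rw [h1, ← mul_assoc, ← pow_add]
    have h2 : (-1 : ℂ) ^ (j + j) = 1 := by
      rw [← two_mul, pow_mul]
      norm_num
    rw [h2, one_mul]
  -- power sums of roots as traces
  have hP : ∀ k : ℕ, (φ ((A ^ k).trace) : ℂ) = (s.map (· ^ k)).sum := by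
    intro k
    rw [AddMonoidHom.map_trace φ (A ^ k)]
    have hmm : φ.mapMatrix (A ^ k) = Ac ^ k := by
      show φ.mapMatrix (A ^ k) = φ.mapMatrix A ^ k
      rw [_root_.map_pow]
    rw [show (A ^ k).map φ = Ac ^ k from hmm]
    exact tracePowAux m (Fin m) inferInstance inferInstance (Fintype.card_fin m) Ac k
  -- Newton's identity for the roots
  obtain ⟨g, hg⟩ : ∃ g : Fin m → ℂ, Multiset.map g Finset.univ.val = s := by
    have hl : s.toList.length = m := by rw [Multiset.length_toList, hs_card]
    refine ⟨fun i => s.toList.get (Fin.cast hl.symm i), ?_⟩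
    rw [Fin.univ_val_map]
    have h6 : List.ofFn (fun i : Fin m => s.toList.get (Fin.cast hl.symm i)) = s.toList :=
      (List.ofFn_congr hl s.toList.get).symm.trans (List.ofFn_get s.toList)
    rw [h6, Multiset.coe_toList]
  have hesymm : ∀ j : ℕ, MvPolynomial.eval g (MvPolynomial.esymm (Fin m) ℂ j) = s.esymm j := by
    intro j
    rw [← hg, Finset.esymm_map_val, MvPolynomial.esymm]
    simp [MvPolynomial.eval_prod]
  have hpsum : ∀ k : ℕ, MvPolynomial.eval g (MvPolynomial.psum (Fin m) ℂ k)
      = (s.map (· ^ k)).sum := by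
    intro k
    rw [MvPolynomial.psum, map_sum]
    simp only [_root_.map_pow, MvPolynomial.eval_X]
    rw [← hg, Multiset.map_map]
    rfl
  have hnewton := congrArg (MvPolynomial.eval g) (MvPolynomial.mul_esymm_eq_sum (Fin m) ℂ r)
  simp only [_root_.map_mul, _root_.map_pow, _root_.map_neg, _root_.map_one, map_natCast,
    map_sum, hesymm] at hnewton
  -- turn filtered antidiagonal sum into a range sum
  have hanti : ∑ a ∈ Finset.filter (fun a => a.1 < r) (Finset.HasAntidiagonal.antidiagonal r),
        (-1 : ℂ) ^ a.1 * s.esymm a.1 * MvPolynomial.eval g (MvPolynomial.psum (Fin m) ℂ a.2)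
      = ∑ j ∈ Finset.range r, (-1 : ℂ) ^ j * s.esymm j * (s.map (· ^ (r - j))).sum := by
    refine Finset.sum_bij' (fun a _ => a.1) (fun j _ => (j, r - j)) ?_ ?_ ?_ ?_ ?_
    · intro a ha
      simp only [Finset.mem_filter, Finset.mem_antidiagonal] at ha
      simp only [Finset.mem_range]
      omega
    · intro j hj
      simp only [Finset.mem_range] at hj
      simp only [Finset.mem_filter, Finset.HasAntidiagonal.mem_antidiagonal]
      omega
    · intro a ha
      simp only [Finset.mem_filter, Finset.HasAntidiagonal.mem_antidiagonal] at ha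
      have : r - a.1 = a.2 := by omega
      simp [this]
    · intro j hj
      rfl
    · intro a ha
      simp only [Finset.mem_filter, Finset.HasAntidiagonal.mem_antidiagonal] at ha
      have h2 : a.2 = r - a.1 := by omega
      rw [h2, hpsum]
  rw [hanti] at hnewton
  -- hnewton : (r : ℂ) * s.esymm r = (-1)^(r+1) * Σ_{j<r} (-1)^j esymm j * P (r-j)
  -- Left-hand side of the goal, complexified
  have hLHS : (φ (Matrix.trace (A * newtonEval m A A (r - 1))) : ℂ)
      = ∑ k ∈ Finset.range r, (-1 : ℂ) ^ k * s.esymm (r - 1 - k) * (s.map (· ^ (k + 1))).sum := by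
    rw [newtonEval, Finset.mul_sum, Matrix.trace_sum]
    have hr' : r - 1 + 1 = r := by omega
    rw [hr', map_sum]
    refine Finset.sum_congr rfl ?_
    intro k hk
    simp only [Finset.mem_range] at hk
    rw [Matrix.mul_smul, Matrix.trace_smul, smul_eq_mul, ← pow_succ']
    rw [_root_.map_mul, _root_.map_mul, _root_.map_pow, _root_.map_neg, _root_.map_one,
      hE (r - 1 - k) (by omega), hP (k + 1), mul_assoc]
  -- reflect the sum
  have hreflect : ∑ k ∈ Finset.range r, (-1 : ℂ) ^ k * s.esymm (r - 1 - k) * (s.map (· ^ (k + 1))).sum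
      = (-1 : ℂ) ^ (r - 1) *
        ∑ j ∈ Finset.range r, (-1 : ℂ) ^ j * s.esymm j * (s.map (· ^ (r - j))).sum := by
    rw [Finset.mul_sum]
    rw [← Finset.sum_range_reflect (fun j => (-1 : ℂ) ^ (r - 1) *
      ((-1 : ℂ) ^ j * s.esymm j * (s.map (· ^ (r - j))).sum)) r]
    refine Finset.sum_congr rfl ?_
    intro k hk
    simp only [Finset.mem_range] at hk
    have h1 : r - (r - 1 - k) = k + 1 := by omega
    rw [h1]
    have h2 : (-1 : ℂ) ^ (r - 1) * (-1 : ℂ) ^ (r - 1 - k) = (-1 : ℂ) ^ k := by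
      rw [← pow_add]
      have h3 : (r - 1) + (r - 1 - k) = 2 * (r - 1 - k) + k := by omega
      rw [h3, pow_add, pow_mul]
      norm_num
    calc (-1 : ℂ) ^ k * s.esymm (r - 1 - k) * (s.map (· ^ (k + 1))).sum
        = ((-1 : ℂ) ^ (r - 1) * (-1 : ℂ) ^ (r - 1 - k)) * s.esymm (r - 1 - k)
            * (s.map (· ^ (k + 1))).sum := by rw [h2]
      _ = (-1 : ℂ) ^ (r - 1) *
            ((-1 : ℂ) ^ (r - 1 - k) * s.esymm (r - 1 - k) * (s.map (· ^ (k + 1))).sum) := by ring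
  -- put everything together over ℂ
  have hfinal : (φ (Matrix.trace (A * newtonEval m A A (r - 1))) : ℂ)
      = (r : ℂ) * s.esymm r := by
    rw [hLHS, hreflect]
    have hsum : ∑ j ∈ Finset.range r, (-1 : ℂ) ^ j * s.esymm j * (s.map (· ^ (r - j))).sum
        = (-1 : ℂ) ^ (r + 1) * ((r : ℂ) * s.esymm r) := by
      rw [hnewton, ← mul_assoc, ← pow_add]
      have : (-1 : ℂ) ^ (r + 1 + (r + 1)) = 1 := by
        rw [← two_mul, pow_mul]
        norm_num
      rw [this, one_mul]
    rw [hsum, ← mul_assoc, ← pow_add]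
    have : (-1 : ℂ) ^ (r - 1 + (r + 1)) = 1 := by
      have h4 : r - 1 + (r + 1) = 2 * r := by omega
      rw [h4, pow_mul]
      norm_num
    rw [this, one_mul]
  -- descend to ℝ
  have hrhs : (φ ((r : ℝ) * elemInv m A r) : ℂ) = (r : ℂ) * s.esymm r := by
    rw [_root_.map_mul, map_natCast, hE r hrm]
  exact φ.injective (hfinal.trans hrhs.symm)
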